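/- Let P be a Markov kernel on a measurable space Z, V : Z → [e, ∞) measurable with W := log V, and suppose there exist λ ∈ [0,1) and b ≥ 0 such that PV(z) ≤ λ V(z) + b for all z ∈ Z. Let Ā : Z → ℝ^{d×d} be measurable with |Ā(z)_{i,j}| ≤ C_A W(z)^β for all z ∈ Z and all entries (i,j), where C_A > 0 and β > 0, and let A be any fixed d×d real matrix. Then for every real numbers q, 𝒦 with 1 ≤ q ≤ 𝒦, every j ∈ ℕ, and every z ∈ Z: ( ∫_Z ‖Ā(y) − A‖^q P^j(z, dy) )^{1/q} ≤ ( ‖A‖ + d C_A (β𝒦/e)^{β} (1 + b/(1−λ))^{1/𝒦} ) · V(z)^{1/𝒦}, where ‖·‖ is the spectral norm. -/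

import Mathlib

open MeasureTheory ProbabilityTheory Matrix
open scoped ENNReal NNReal

/-- The `n`-fold iterate `Pⁿ` of a Markov kernel. -/
noncomputable def iterKernel {Z : Type*} [MeasurableSpace Z] (P : Kernel Z Z) :
    ℕ → Kernel Z Z
  | 0 => Kernel.id
  | n + 1 => (iterKernel P n) ∘ₖ P

/-- The spectral norm (Euclidean operator norm) of a real square matrix. -/
noncomputable def specNorm {d : ℕ} (M : Matrix (Fin d) (Fin d) ℝ) : ℝ :=
  ‖(Matrix.toEuclideanCLM (𝕜 := ℝ) M :
      EuclideanSpace ℝ (Fin d) →L[ℝ] EuclideanSpace ℝ (Fin d))‖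

instance iterKernel_markov {Z : Type*} [MeasurableSpace Z] (P : Kernel Z Z) [IsMarkovKernel P]
    (n : ℕ) : IsMarkovKernel (iterKernel P n) := by
  induction n with
  | zero => rw [iterKernel]; infer_instance
  | succ n ih => rw [iterKernel]; infer_instance

lemma specNorm_nonneg {d : ℕ} (M : Matrix (Fin d) (Fin d) ℝ) : 0 ≤ specNorm M :=
  norm_nonneg _

lemma specNorm_sub_le {d : ℕ} (M N : Matrix (Fin d) (Fin d) ℝ) :
    specNorm (M - N) ≤ specNorm M + specNorm N := by
  unfold specNorm; rw [map_sub]; exact norm_sub_le _ _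

lemma specNorm_le_entrywise {d : ℕ} (M : Matrix (Fin d) (Fin d) ℝ) {C : ℝ} (hC : 0 ≤ C)
    (h : ∀ i j, |M i j| ≤ C) : specNorm M ≤ d * C := by
  unfold specNorm
  apply ContinuousLinearMap.opNorm_le_bound _ (by positivity)
  intro x
  set y : Fin d → ℝ := WithLp.equiv 2 _ x with hy
  have hxy : x = (WithLp.equiv 2 _).symm y := rfl
  have hnx : ‖x‖ = Real.sqrt (∑ i, (y i) ^ 2) := by
    rw [EuclideanSpace.norm_eq]
    congr 1
    refine Finset.sum_congr rfl fun i _ => ?_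
    rw [Real.norm_eq_abs, sq_abs]
    rfl
  have hCS : ∑ j, |y j| ≤ Real.sqrt d * ‖x‖ := by
    have h1 : (∑ j, |y j|) ^ 2 ≤ (d : ℝ) * ∑ j, |y j| ^ 2 := by
      simpa using sq_sum_le_card_mul_sum_sq (s := (Finset.univ : Finset (Fin d)))
        (f := fun j => |y j|)
    have h2 : (∑ j, |y j| ^ 2) = ∑ j, (y j) ^ 2 := by
      refine Finset.sum_congr rfl fun j _ => sq_abs _
    calc ∑ j, |y j| = Real.sqrt ((∑ j, |y j|) ^ 2) :=
          (Real.sqrt_sq (by positivity)).symm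
      _ ≤ Real.sqrt ((d : ℝ) * ∑ j, (y j) ^ 2) := by
          apply Real.sqrt_le_sqrt; rw [← h2]; exact h1
      _ = Real.sqrt d * ‖x‖ := by
          rw [hnx, Real.sqrt_mul (by positivity)]
  have hrow : ∀ i, |(M *ᵥ y) i| ≤ C * ∑ j, |y j| := by
    intro i
    calc |(M *ᵥ y) i| = |∑ j, M i j * y j| := rfl
      _ ≤ ∑ j, |M i j * y j| := Finset.abs_sum_le_sum_abs _ _
      _ ≤ ∑ j, C * |y j| := by
          refine Finset.sum_le_sum fun j _ => ?_
          rw [abs_mul]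
          exact mul_le_mul_of_nonneg_right (h i j) (abs_nonneg _)
      _ = C * ∑ j, |y j| := by rw [Finset.mul_sum]
  have happ : toEuclideanCLM (𝕜 := ℝ) M x = (WithLp.equiv 2 _).symm (M *ᵥ y) := by
    rw [hxy]; rfl
  rw [happ]
  have hnorm : ‖(WithLp.equiv 2 ((Fin d) → ℝ)).symm (M *ᵥ y)‖
      = Real.sqrt (∑ i, ((M *ᵥ y) i) ^ 2) := by
    rw [EuclideanSpace.norm_eq]
    congr 1
    refine Finset.sum_congr rfl fun i _ => ?_
    rw [Real.norm_eq_abs, sq_abs]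
    rfl
  rw [hnorm]
  have hS : 0 ≤ ∑ j, |y j| := by positivity
  calc Real.sqrt (∑ i, ((M *ᵥ y) i) ^ 2)
      ≤ Real.sqrt (∑ _i : Fin d, (C * ∑ j, |y j|) ^ 2) := by
        apply Real.sqrt_le_sqrt
        refine Finset.sum_le_sum fun i _ => ?_
        rw [← sq_abs ((M *ᵥ y) i)]
        exact pow_le_pow_left₀ (abs_nonneg _) (hrow i) 2
    _ = Real.sqrt d * (C * ∑ j, |y j|) := by
        rw [Finset.sum_const, Finset.card_univ, Fintype.card_fin, nsmul_eq_mul,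
          Real.sqrt_mul (by positivity), Real.sqrt_sq (by positivity)]
    _ ≤ Real.sqrt d * (C * (Real.sqrt d * ‖x‖)) := by
        refine mul_le_mul_of_nonneg_left (mul_le_mul_of_nonneg_left hCS hC) (Real.sqrt_nonneg _)
    _ = (Real.sqrt d * Real.sqrt d) * C * ‖x‖ := by ring
    _ = d * C * ‖x‖ := by rw [Real.mul_self_sqrt (by positivity)]

lemma log_le_div_exp {t : ℝ} (ht : 0 < t) : Real.log t ≤ t / Real.exp 1 := by
  have h := Real.log_le_sub_one_of_pos (div_pos ht (Real.exp_pos 1))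
  rw [Real.log_div ht.ne' (Real.exp_ne_zero 1), Real.log_exp] at h
  linarith

lemma W_rpow_le {v β 𝒦 : ℝ} (hv : Real.exp 1 ≤ v) (hβ : 0 < β) (h𝒦 : 1 ≤ 𝒦) :
    Real.log v ^ β ≤ (β * 𝒦 / Real.exp 1) ^ β * v ^ (1 / 𝒦) := by
  have h𝒦0 : 0 < 𝒦 := lt_of_lt_of_le one_pos h𝒦
  have hv0 : 0 < v := lt_of_lt_of_le (Real.exp_pos 1) hv
  set t : ℝ := v ^ (1 / (β * 𝒦)) with hts
  have ht0 : 0 < t := Real.rpow_pos_of_pos hv0 _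
  have hlog : Real.log v = (β * 𝒦) * Real.log t := by
    rw [hts, Real.log_rpow hv0]
    field_simp
  have hW0 : 0 ≤ Real.log v := by
    have h1 : (1:ℝ) ≤ Real.log v := by
      calc (1:ℝ) = Real.log (Real.exp 1) := (Real.log_exp 1).symm
        _ ≤ Real.log v := Real.log_le_log (Real.exp_pos 1) hv
    linarith
  have hWle : Real.log v ≤ (β * 𝒦 / Real.exp 1) * t := by
    rw [hlog]
    have := log_le_div_exp ht0
    calc (β * 𝒦) * Real.log t ≤ (β * 𝒦) * (t / Real.exp 1) := by
          apply mul_le_mul_of_nonneg_left this (by positivity)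
      _ = (β * 𝒦 / Real.exp 1) * t := by ring
  calc Real.log v ^ β ≤ ((β * 𝒦 / Real.exp 1) * t) ^ β :=
        Real.rpow_le_rpow hW0 hWle hβ.le
    _ = (β * 𝒦 / Real.exp 1) ^ β * t ^ β := Real.mul_rpow (by positivity) ht0.le
    _ = (β * 𝒦 / Real.exp 1) ^ β * v ^ (1 / 𝒦) := by
        rw [hts, ← Real.rpow_mul hv0.le]
        congr 2
        field_simp

lemma drift_iter {Z : Type*} [MeasurableSpace Z] (P : Kernel Z Z) [IsMarkovKernel P]
    (V : Z → ℝ) (hVmeas : Measurable V) (hV1 : ∀ z, 0 ≤ V z)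
    (lam b : ℝ) (hlam0 : 0 ≤ lam) (hb : 0 ≤ b)
    (hdrift : ∀ z, ∫⁻ y, ENNReal.ofReal (V y) ∂(P z) ≤ ENNReal.ofReal (lam * V z + b))
    (j : ℕ) (z : Z) :
    ∫⁻ y, ENNReal.ofReal (V y) ∂(iterKernel P j z) ≤
      ENNReal.ofReal (lam ^ j * V z + b * ∑ i ∈ Finset.range j, lam ^ i) := by
  induction j generalizing z with
  | zero =>
    rw [iterKernel, Kernel.id_apply, lintegral_dirac' _ hVmeas.ennreal_ofReal]
    simp
  | succ n ih =>
    rw [iterKernel, Kernel.lintegral_comp _ _ _ hVmeas.ennreal_ofReal]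
    set S := ∑ i ∈ Finset.range n, lam ^ i with hS
    have hS0 : 0 ≤ S := Finset.sum_nonneg fun i _ => pow_nonneg hlam0 i
    have heq : ∀ y : Z, ENNReal.ofReal (lam ^ n * V y + b * S)
        = ENNReal.ofReal (lam ^ n) * ENNReal.ofReal (V y) + ENNReal.ofReal (b * S) := by
      intro y
      rw [ENNReal.ofReal_add (mul_nonneg (pow_nonneg hlam0 n) (hV1 y)) (mul_nonneg hb hS0),
        ENNReal.ofReal_mul (pow_nonneg hlam0 n)]
    calc ∫⁻ y, (∫⁻ w, ENNReal.ofReal (V w) ∂(iterKernel P n y)) ∂(P z)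
        ≤ ∫⁻ y, ENNReal.ofReal (lam ^ n * V y + b * S) ∂(P z) :=
          lintegral_mono fun y => ih y
      _ = ENNReal.ofReal (lam ^ n) * (∫⁻ y, ENNReal.ofReal (V y) ∂(P z))
            + ENNReal.ofReal (b * S) := by
          simp_rw [heq]
          rw [lintegral_add_right _ measurable_const,
            lintegral_const_mul _ hVmeas.ennreal_ofReal, lintegral_const, measure_univ, mul_one]
      _ ≤ ENNReal.ofReal (lam ^ n) * ENNReal.ofReal (lam * V z + b) + ENNReal.ofReal (b * S) := by
          gcongr
          exact hdrift z
      _ = ENNReal.ofReal (lam ^ n * (lam * V z + b) + b * S) := by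
          rw [← ENNReal.ofReal_mul (pow_nonneg hlam0 n),
            ← ENNReal.ofReal_add
              (mul_nonneg (pow_nonneg hlam0 n)
                (add_nonneg (mul_nonneg hlam0 (hV1 z)) hb)) (mul_nonneg hb hS0)]
      _ = ENNReal.ofReal (lam ^ (n+1) * V z + b * ∑ i ∈ Finset.range (n+1), lam ^ i) := by
          rw [Finset.sum_range_succ, ← hS]
          congr 1
          ring

lemma lintegral_rpow_le_rpow_lintegral' {α : Type*} [MeasurableSpace α] (μ : Measure α)
    [IsProbabilityMeasure μ] (h : α → ℝ≥0∞) (hm : Measurable h) {r : ℝ}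
    (hr0 : 0 < r) (hr1 : r ≤ 1) :
    ∫⁻ a, h a ^ r ∂μ ≤ (∫⁻ a, h a ∂μ) ^ r := by
  rcases eq_or_lt_of_le hr1 with heq | hlt
  · subst heq; simp
  · have hpq : Real.HolderConjugate (1/r) (1/(1-r)) := by
      rw [Real.holderConjugate_iff]
      constructor
      · rw [lt_div_iff₀ hr0, one_mul]; exact hlt
      · rw [one_div, one_div, inv_inv, inv_inv]; ring
    have key := ENNReal.lintegral_mul_le_Lp_mul_Lq μ hpq
      ((hm.pow_const r).aemeasurable) (aemeasurable_const (b := (1:ℝ≥0∞)))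
    simp only [Pi.mul_apply, Pi.one_apply, mul_one] at key
    calc ∫⁻ a, h a ^ r ∂μ ≤ (∫⁻ a, (h a ^ r) ^ (1/r) ∂μ) ^ (1 / (1/r)) *
          (∫⁻ _a, (1:ℝ≥0∞) ^ (1/(1-r)) ∂μ) ^ (1 / (1/(1-r))) := key
      _ = (∫⁻ a, h a ∂μ) ^ r := by
          simp_rw [← ENNReal.rpow_mul, mul_one_div_cancel hr0.ne', ENNReal.one_rpow,
            ENNReal.rpow_one, lintegral_one, measure_univ, ENNReal.one_rpow, mul_one,
            one_div_one_div]

/-- Under a geometric drift condition `PV ≤ λV + b`, if the entries of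
`Ā` satisfy `|Ā(z)_{ij}| ≤ C_A W(z)^β` with `W = log V`, then for every `1 ≤ q ≤ 𝒦`,
every `j ∈ ℕ` and `z`,
`(∫ ‖Ā(y) − A‖^q dP^j(z,·))^{1/q}
  ≤ (‖A‖ + d C_A (β𝒦/e)^β (1 + b/(1−λ))^{1/𝒦}) V(z)^{1/𝒦}`. -/
theorem moment_bound_matrix_function {Z : Type*} [MeasurableSpace Z]
    (P : Kernel Z Z) [IsMarkovKernel P]
    (V : Z → ℝ) (hVmeas : Measurable V) (hVe : ∀ z, Real.exp 1 ≤ V z)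
    (W : Z → ℝ) (hW : W = fun z => Real.log (V z))
    (lam b : ℝ) (hlam0 : 0 ≤ lam) (hlam1 : lam < 1) (hb : 0 ≤ b)
    (hdrift : ∀ z, ∫⁻ y, ENNReal.ofReal (V y) ∂(P z) ≤ ENNReal.ofReal (lam * V z + b))
    (d : ℕ) (Abar : Z → Matrix (Fin d) (Fin d) ℝ)
    (hAbar_meas : ∀ i j, Measurable (fun z => Abar z i j))
    (CA β : ℝ) (hCA : 0 < CA) (hβ : 0 < β)
    (hAbar_bd : ∀ z (i j : Fin d), |Abar z i j| ≤ CA * W z ^ β)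
    (A : Matrix (Fin d) (Fin d) ℝ)
    (q 𝒦 : ℝ) (hq : 1 ≤ q) (hq𝒦 : q ≤ 𝒦)
    (j : ℕ) (z : Z) :
    (∫⁻ y, ENNReal.ofReal (specNorm (Abar y - A) ^ q) ∂(iterKernel P j z)) ^ (1 / q) ≤
      ENNReal.ofReal
        ((specNorm A +
            (d : ℝ) * CA * (β * 𝒦 / Real.exp 1) ^ β * (1 + b / (1 - lam)) ^ (1 / 𝒦)) *
          V z ^ (1 / 𝒦)) := by
  have h𝒦1 : 1 ≤ 𝒦 := le_trans hq hq𝒦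
  have h𝒦0 : 0 < 𝒦 := lt_of_lt_of_le one_pos h𝒦1
  have hq0 : 0 < q := lt_of_lt_of_le one_pos hq
  have hV0 : ∀ y, 0 ≤ V y := fun y => le_trans (Real.exp_pos 1).le (hVe y)
  have hV1 : ∀ y, 1 ≤ V y := fun y => by
    have := Real.add_one_le_exp 1
    have := hVe y
    linarith
  have h1l : 0 < 1 - lam := by linarith
  have hcb : 0 < β * 𝒦 / Real.exp 1 := div_pos (mul_pos hβ h𝒦0) (Real.exp_pos 1)
  set c : ℝ := (d : ℝ) * CA * (β * 𝒦 / Real.exp 1) ^ β with hc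
  have hc0 : 0 ≤ c :=
    mul_nonneg (mul_nonneg (Nat.cast_nonneg d) hCA.le) (Real.rpow_nonneg hcb.le β)
  set sA := specNorm A with hsA
  have hsA0 : 0 ≤ sA := specNorm_nonneg A
  set μ := iterKernel P j z with hμ
  haveI : IsProbabilityMeasure μ := (iterKernel_markov P j).isProbabilityMeasure z
  -- pointwise bound
  have hbd : ∀ y, specNorm (Abar y - A) ≤ sA + c * V y ^ (1/𝒦) := by
    intro y
    have h2 : W y ^ β ≤ (β * 𝒦 / Real.exp 1) ^ β * V y ^ (1/𝒦) := by
      rw [hW]; exact W_rpow_le (hVe y) hβ h𝒦1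
    have hWy0 : 0 ≤ W y ^ β := by
      apply Real.rpow_nonneg
      rw [hW]
      have : (1:ℝ) ≤ Real.log (V y) := by
        calc (1:ℝ) = Real.log (Real.exp 1) := (Real.log_exp 1).symm
          _ ≤ Real.log (V y) := Real.log_le_log (Real.exp_pos 1) (hVe y)
      linarith
    have h1 : specNorm (Abar y) ≤ (d:ℝ) * (CA * W y ^ β) :=
      specNorm_le_entrywise _ (mul_nonneg hCA.le hWy0) (fun i j' => hAbar_bd y i j')
    calc specNorm (Abar y - A) ≤ specNorm (Abar y) + specNorm A := specNorm_sub_le _ _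
      _ ≤ (d:ℝ) * (CA * ((β * 𝒦 / Real.exp 1) ^ β * V y ^ (1/𝒦))) + sA := by
          refine add_le_add (le_trans h1 ?_) le_rfl
          refine mul_le_mul_of_nonneg_left ?_ (Nat.cast_nonneg d)
          exact mul_le_mul_of_nonneg_left h2 hCA.le
      _ = sA + c * V y ^ (1/𝒦) := by rw [hc]; ring
  set F : Z → ℝ≥0∞ := fun _ => ENNReal.ofReal sA with hF
  set G : Z → ℝ≥0∞ := fun y => ENNReal.ofReal c * ENNReal.ofReal (V y) ^ (1/𝒦) with hG
  have hGmeas : Measurable G := measurable_const.mul (hVmeas.ennreal_ofReal.pow_const _)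
  have hpt : ∀ y, ENNReal.ofReal (specNorm (Abar y - A) ^ q) ≤ ((F + G) y) ^ q := by
    intro y
    rw [← ENNReal.ofReal_rpow_of_nonneg (specNorm_nonneg _) hq0.le]
    apply ENNReal.rpow_le_rpow _ hq0.le
    calc ENNReal.ofReal (specNorm (Abar y - A)) ≤ ENNReal.ofReal (sA + c * V y ^ (1/𝒦)) :=
        ENNReal.ofReal_le_ofReal (hbd y)
      _ = (F + G) y := by
        rw [ENNReal.ofReal_add hsA0 (mul_nonneg hc0 (Real.rpow_nonneg (hV0 y) _)),
          ENNReal.ofReal_mul hc0,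
          ← ENNReal.ofReal_rpow_of_nonneg (hV0 y) (by positivity : (0:ℝ) ≤ 1/𝒦)]
        rfl
  -- drift bound
  have hdriftz : ∫⁻ y, ENNReal.ofReal (V y) ∂μ ≤ ENNReal.ofReal ((1 + b/(1-lam)) * V z) := by
    refine le_trans (drift_iter P V hVmeas hV0 lam b hlam0 hb hdrift j z)
      (ENNReal.ofReal_le_ofReal ?_)
    have hgeom : ∑ i ∈ Finset.range j, lam ^ i ≤ 1/(1-lam) := by
      rw [geom_sum_eq hlam1.ne]
      have hrw : (lam ^ j - 1) / (lam - 1) = (1 - lam ^ j) / (1 - lam) := by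
        rw [← neg_div_neg_eq]; ring_nf
      rw [hrw]
      have hpow1 : lam ^ j ≤ 1 := pow_le_one₀ hlam0 hlam1.le
      have hpow0 : 0 ≤ lam ^ j := pow_nonneg hlam0 j
      gcongr
      linarith
    have hpow1 : lam ^ j ≤ 1 := pow_le_one₀ hlam0 hlam1.le
    have hpow0 : 0 ≤ lam ^ j := pow_nonneg hlam0 j
    have hVz1 : 1 ≤ V z := hV1 z
    have hbl : 0 ≤ b / (1 - lam) := div_nonneg hb h1l.le
    have hS0 : 0 ≤ ∑ i ∈ Finset.range j, lam ^ i :=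
      Finset.sum_nonneg fun i _ => pow_nonneg hlam0 i
    have h1 : lam ^ j * V z ≤ V z := by nlinarith
    have h2 : b * ∑ i ∈ Finset.range j, lam ^ i ≤ (b/(1-lam)) * V z := by
      calc b * ∑ i ∈ Finset.range j, lam ^ i ≤ b * (1/(1-lam)) :=
            mul_le_mul_of_nonneg_left hgeom hb
        _ = b/(1-lam) := by ring
        _ ≤ (b/(1-lam)) * V z := by nlinarith
    nlinarith
  -- main computation
  set r : ℝ := q / 𝒦 with hr
  have hr0 : 0 < r := div_pos hq0 h𝒦0
  have hr1 : r ≤ 1 := (div_le_one h𝒦0).2 hq𝒦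
  have hFq : (∫⁻ y, F y ^ q ∂μ) ^ (1/q) = ENNReal.ofReal sA := by
    rw [hF]
    simp only [lintegral_const, measure_univ, mul_one]
    rw [← ENNReal.rpow_mul, mul_one_div_cancel hq0.ne', ENNReal.rpow_one]
  have hGq : (∫⁻ y, G y ^ q ∂μ) ^ (1/q) ≤
      ENNReal.ofReal c * ENNReal.ofReal ((1 + b/(1-lam)) * V z) ^ (1/𝒦) := by
    have hGyq : ∀ y, G y ^ q = ENNReal.ofReal c ^ q * ENNReal.ofReal (V y) ^ r := by
      intro y
      rw [hG]
      rw [ENNReal.mul_rpow_of_nonneg _ _ hq0.le, ← ENNReal.rpow_mul, hr,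
        one_div, inv_mul_eq_div]
    simp_rw [hGyq]
    rw [lintegral_const_mul _ (hVmeas.ennreal_ofReal.pow_const r)]
    have hJensen : ∫⁻ y, ENNReal.ofReal (V y) ^ r ∂μ ≤ (∫⁻ y, ENNReal.ofReal (V y) ∂μ) ^ r :=
      lintegral_rpow_le_rpow_lintegral' μ _ hVmeas.ennreal_ofReal hr0 hr1
    calc (ENNReal.ofReal c ^ q * ∫⁻ y, ENNReal.ofReal (V y) ^ r ∂μ) ^ (1/q)
        ≤ (ENNReal.ofReal c ^ q * (ENNReal.ofReal ((1 + b/(1-lam)) * V z)) ^ r) ^ (1/q) := by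
          apply ENNReal.rpow_le_rpow _ (by positivity)
          refine mul_le_mul_of_nonneg_left (le_trans hJensen ?_) zero_le
          exact ENNReal.rpow_le_rpow hdriftz hr0.le
      _ = ENNReal.ofReal c * ENNReal.ofReal ((1 + b/(1-lam)) * V z) ^ (1/𝒦) := by
          rw [ENNReal.mul_rpow_of_nonneg _ _ (by positivity : (0:ℝ) ≤ 1/q),
            ← ENNReal.rpow_mul, ← ENNReal.rpow_mul, mul_one_div_cancel hq0.ne',
            ENNReal.rpow_one]
          have hrq : r * (1/q) = 1/𝒦 := by
            rw [hr]; field_simp [hq0.ne', h𝒦0.ne']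
          rw [hrq]
  have hB0 : 0 ≤ 1 + b/(1-lam) := by
    have : 0 ≤ b / (1 - lam) := div_nonneg hb h1l.le
    linarith
  calc (∫⁻ y, ENNReal.ofReal (specNorm (Abar y - A) ^ q) ∂μ) ^ (1/q)
      ≤ (∫⁻ y, ((F + G) y) ^ q ∂μ) ^ (1/q) :=
        ENNReal.rpow_le_rpow (lintegral_mono hpt) (by positivity)
    _ ≤ (∫⁻ y, F y ^ q ∂μ) ^ (1/q) + (∫⁻ y, G y ^ q ∂μ) ^ (1/q) :=
        ENNReal.lintegral_Lp_add_le measurable_const.aemeasurable hGmeas.aemeasurable hq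
    _ ≤ ENNReal.ofReal sA +
          ENNReal.ofReal c * ENNReal.ofReal ((1 + b/(1-lam)) * V z) ^ (1/𝒦) := by
        rw [hFq]; exact add_le_add le_rfl hGq
    _ ≤ ENNReal.ofReal ((sA + c * (1 + b/(1-lam)) ^ (1/𝒦)) * V z ^ (1/𝒦)) := by
        rw [ENNReal.ofReal_rpow_of_nonneg (mul_nonneg hB0 (hV0 z)) (by positivity : (0:ℝ) ≤ 1/𝒦),
          Real.mul_rpow hB0 (hV0 z), ← ENNReal.ofReal_mul hc0, ← ENNReal.ofReal_add hsA0
            (mul_nonneg hc0 (mul_nonneg (Real.rpow_nonneg hB0 _) (Real.rpow_nonneg (hV0 z) _)))]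
        apply ENNReal.ofReal_le_ofReal
        have hVz : 1 ≤ V z ^ (1/𝒦) := Real.one_le_rpow (hV1 z) (by positivity)
        have hcB : 0 ≤ c * (1 + b/(1-lam)) ^ (1/𝒦) :=
          mul_nonneg hc0 (Real.rpow_nonneg hB0 _)
        nlinarith
    _ = ENNReal.ofReal
        ((specNorm A +
            (d : ℝ) * CA * (β * 𝒦 / Real.exp 1) ^ β * (1 + b / (1 - lam)) ^ (1 / 𝒦)) *
          V z ^ (1 / 𝒦)) := rfl
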